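/- arXiv:math/0602258 — 2 statements merged into one kernel-verified Lean document; each statement's English description precedes it below -/
import Mathlib

section
/- If c = (c_1,c_2,c_3,c_4,c_5) ∈ ℤ⁵ is cohomology-free with c_5 = 1 and c_1 ≥ 2, then c_2 ≥ 2c_1 − 1, c_3 ≥ 3c_1 − 2, and c_4 ≥ c_1. -/
/-- The primitive ray generators `l₁,…,l₇` of the fan, in counterclockwise order,
acting on `ℤ²` by the dot product. -/
def rayForm : Fin 7 → ℤ × ℤ :=
  ![(1, -1), (2, -1), (3, -1), (1, 0), (0, 1), (-1, 2), (0, -1)]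

/-- Extend `c ∈ ℤ⁵` to seven coefficients by `c₆ = c₇ = 0`. -/
def cExt (c : Fin 5 → ℤ) : Fin 7 → ℤ :=
  fun i => if h : (i : ℕ) < 5 then c ⟨i, h⟩ else 0

/-- `N_c(m) = {i : l_i(m) + c_i < 0}`. -/
def Nset (c : Fin 5 → ℤ) (m : ℤ × ℤ) : Finset (Fin 7) :=
  Finset.univ.filter fun i =>
    (rayForm i).1 * m.1 + (rayForm i).2 * m.2 + cExt c i < 0

/-- A subset of the cyclic index set `Fin 7` is a circular interval if it is empty
or of the form `{a, a+1, …, b}` with indices taken modulo 7. -/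
def IsCircularInterval (S : Finset (Fin 7)) : Prop :=
  S = ∅ ∨ ∃ (a : Fin 7) (n : ℕ),
    S = (Finset.range (n + 1)).image fun j : ℕ => a + Fin.ofNat 7 j

/-- `c ∈ ℤ⁵` is cohomology-free if for every `m ∈ ℤ²` and both `ε ∈ {1, -1}`,
the set `N_{εc}(m)` is a circular interval different from the whole index set. -/
def CohomologyFree (c : Fin 5 → ℤ) : Prop :=
  ∀ m : ℤ × ℤ, ∀ ε : ℤ, ε = 1 ∨ ε = -1 →
    IsCircularInterval (Nset (ε • c) m) ∧ Nset (ε • c) m ≠ Finset.univ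

lemma circInt_mem (a : Fin 7) (n : ℕ) (x : Fin 7) :
    x ∈ (Finset.range (n+1)).image (fun j : ℕ => a + Fin.ofNat 7 j) ↔ (x - a).val ≤ n := by
  simp only [Finset.mem_image, Finset.mem_range]
  constructor
  · rintro ⟨j, hj, rfl⟩
    have h : a + Fin.ofNat 7 j - a = Fin.ofNat 7 j := add_sub_cancel_left _ _
    rw [h, Fin.val_ofNat]
    omega
  · intro hx
    exact ⟨(x - a).val, by omega, by rw [Fin.ofNat_val_eq_self]; exact add_sub_cancel _ _⟩

lemma fin7_sub_val (x a : Fin 7) : (x - a).val = (7 - a.val + x.val) % 7 := by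
  rw [Fin.sub_def]

/-- A circular interval cannot contain `p, r` while missing `q, s` when
`p < q < r < s` (alternating in–out–in–out around the circle). -/
lemma not_alt1 (S : Finset (Fin 7)) (h : IsCircularInterval S)
    (p q r s : Fin 7) (hpq : p.val < q.val) (hqr : q.val < r.val) (hrs : r.val < s.val)
    (hp : p ∈ S) (hq : q ∉ S) (hr : r ∈ S) (hs : s ∉ S) : False := by
  rcases h with h0 | ⟨a, n, hS⟩
  · rw [h0] at hp; exact absurd hp (Finset.notMem_empty _)
  · rw [hS, circInt_mem] at hp hq hr hs
    rw [fin7_sub_val] at hp hq hr hs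
    have ha := a.isLt
    have h1 := p.isLt
    have h2 := q.isLt
    have h3 := r.isLt
    have h4 := s.isLt
    omega

/-- The out–in–out–in variant. -/
lemma not_alt2 (S : Finset (Fin 7)) (h : IsCircularInterval S)
    (p q r s : Fin 7) (hpq : p.val < q.val) (hqr : q.val < r.val) (hrs : r.val < s.val)
    (hp : p ∉ S) (hq : q ∈ S) (hr : r ∉ S) (hs : s ∈ S) : False := by
  rcases h with h0 | ⟨a, n, hS⟩
  · rw [h0] at hq; exact absurd hq (Finset.notMem_empty _)
  · rw [hS, circInt_mem] at hp hq hr hs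
    rw [fin7_sub_val] at hp hq hr hs
    have ha := a.isLt
    have h1 := p.isLt
    have h2 := q.isLt
    have h3 := r.isLt
    have h4 := s.isLt
    omega

lemma nset_mem (c : Fin 5 → ℤ) (m : ℤ × ℤ) (i : Fin 7) :
    i ∈ Nset c m ↔ (rayForm i).1 * m.1 + (rayForm i).2 * m.2 + cExt c i < 0 := by
  simp [Nset]

/-- If `c` is cohomology-free with `c₅ = 1` and `c₁ ≥ 2`, then
`c₂ ≥ 2c₁ - 1`, `c₃ ≥ 3c₁ - 2` and `c₄ ≥ c₁`. -/
theorem lower_bounds_c5_one_c1_ge_two (c : Fin 5 → ℤ) (h : CohomologyFree c)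
    (h5 : c 4 = 1) (h1 : 2 ≤ c 0) :
    c 1 ≥ 2 * c 0 - 1 ∧ c 2 ≥ 3 * c 0 - 2 ∧ c 3 ≥ c 0 := by
  -- Part 1 : c 1 ≥ 2 * c 0 - 1
  have hb1 : c 1 ≥ 2 * c 0 - 1 := by
    by_contra hc
    push_neg at hc
    obtain ⟨hint, -⟩ := h (1 - c 0, 1) 1 (Or.inl rfl)
    refine not_alt2 _ hint 0 1 4 6 (by decide) (by decide) (by decide) ?_ ?_ ?_ ?_
    · rw [nset_mem]
      show ¬ (1 * (1 - c 0) + (-1) * 1 + 1 * c 0 < 0)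
      omega
    · rw [nset_mem]
      show 2 * (1 - c 0) + (-1) * 1 + 1 * c 1 < 0
      omega
    · rw [nset_mem]
      show ¬ (0 * (1 - c 0) + 1 * 1 + 1 * c 4 < 0)
      omega
    · rw [nset_mem]
      show 0 * (1 - c 0) + (-1) * 1 + 0 < 0
      omega
  -- Part 3 : c 3 ≥ c 0
  have hb3 : c 3 ≥ c 0 := by
    by_contra hc
    push_neg at hc
    obtain ⟨hint, -⟩ := h (c 0 - 1, 0) (-1) (Or.inr rfl)
    refine not_alt1 _ hint 0 3 4 6 (by decide) (by decide) (by decide) ?_ ?_ ?_ ?_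
    · rw [nset_mem]
      show 1 * (c 0 - 1) + (-1) * 0 + (-1) * c 0 < 0
      omega
    · rw [nset_mem]
      show ¬ (1 * (c 0 - 1) + 0 * 0 + (-1) * c 3 < 0)
      omega
    · rw [nset_mem]
      show 0 * (c 0 - 1) + 1 * 0 + (-1) * c 4 < 0
      omega
    · rw [nset_mem]
      show ¬ (0 * (c 0 - 1) + (-1) * 0 + 0 < 0)
      omega
  -- Part 2 : c 2 ≥ 3 * c 0 - 2, using Part 3
  have hb2 : c 2 ≥ 3 * c 0 - 2 := by
    by_contra hc
    push_neg at hc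
    obtain ⟨hint, -⟩ := h (-c 0, -2) 1 (Or.inl rfl)
    refine not_alt1 _ hint 2 3 4 6 (by decide) (by decide) (by decide) ?_ ?_ ?_ ?_
    · rw [nset_mem]
      show 3 * (-c 0) + (-1) * (-2) + 1 * c 2 < 0
      omega
    · rw [nset_mem]
      show ¬ (1 * (-c 0) + 0 * (-2) + 1 * c 3 < 0)
      omega
    · rw [nset_mem]
      show 0 * (-c 0) + 1 * (-2) + 1 * c 4 < 0
      omega
    · rw [nset_mem]
      show ¬ (0 * (-c 0) + (-1) * (-2) + 0 < 0)
      omega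
  exact ⟨hb1, hb2, hb3⟩
end

section
/- Let A = {A_1, ..., A_7} where A_1=(0,0,1,0,0), A_2=(0,1,1,0,0), A_3=(0,1,2,1,0), A_4=(1,1,1,0,0), A_5=(1,1,2,1,0), A_6=(1,2,2,1,0), A_7=(1,2,3,1,0). If S is a subset of A ∪ (−A) such that d − d' is cohomology-free for all d, d' ∈ S, then S has at most 2 elements. -/
/-- The tuples `A₁,…,A₇` (indexed here by `0,…,6`). -/
def Afam : Fin 7 → (Fin 5 → ℤ) :=
  ![![0,0,1,0,0], ![0,1,1,0,0], ![0,1,2,1,0], ![1,1,1,0,0],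
    ![1,1,2,1,0], ![1,2,2,1,0], ![1,2,3,1,0]]

/-! ### Auxiliary material -/

/-- The fourteen vectors `±A₁,…,±A₇`. -/
def Vfam : Fin 14 → (Fin 5 → ℤ) :=
  fun k => if h : (k : ℕ) < 7 then Afam ⟨k, h⟩ else -Afam ⟨(k : ℕ) - 7, by omega⟩

lemma image_range_eq_univ (a : Fin 7) {m : ℕ} (hm : 6 ≤ m) :
    (Finset.range (m + 1)).image (fun j : ℕ => a + Fin.ofNat 7 j) = Finset.univ := by
  apply Finset.eq_univ_iff_forall.mpr
  intro x
  simp only [Finset.mem_image, Finset.mem_range]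
  refine ⟨((x - a : Fin 7) : ℕ), lt_of_lt_of_le (x - a).isLt (by omega), ?_⟩
  rw [Fin.ofNat_val_eq_self, add_sub_cancel]

lemma isCI_iff (S : Finset (Fin 7)) : IsCircularInterval S ↔
    (S = ∅ ∨ ∃ a : Fin 7, ∃ n : Fin 7,
      S = (Finset.range ((n : ℕ) + 1)).image fun j : ℕ => a + Fin.ofNat 7 j) := by
  constructor
  · rintro (h | ⟨a, n, h⟩)
    · exact Or.inl h
    · right
      by_cases hn : n < 7
      · exact ⟨a, ⟨n, hn⟩, h⟩
      · refine ⟨a, ⟨6, by norm_num⟩, ?_⟩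
        rw [h, image_range_eq_univ a (by omega), image_range_eq_univ a (by norm_num)]
  · rintro (h | ⟨a, n, h⟩)
    · exact Or.inl h
    · exact Or.inr ⟨a, n, h⟩

instance : DecidablePred IsCircularInterval :=
  fun S => decidable_of_iff' _ (isCI_iff S)

/-- Adjacency table: pairs whose difference is cohomology-free. -/
def adjCF (i j : Fin 14) : Bool :=
  (i = 6 && j < 6) || (j = 6 && i < 6) ||
  (i = 13 && 7 ≤ j && j < 13) || (j = 13 && 7 ≤ i && i < 13) ||
  ((i : ℕ) + (j : ℕ) = 12 && i ≠ 6)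

def Wtab : Fin 14 → Fin 14 → ℤ × ℤ × ℤ :=
  ![![(0, 0, 1), (0, 1, -1), (-1, -1, -1), (0, 1, -1), (-1, -1, -1), (-1, -1, -1), (0, 0, 1), (-1, -1, 1), (0, -1, -1), (1, 1, -1), (0, -1, -1), (1, 1, -1), (0, 0, 1), (1, 0, -1)],
    ![(0, 1, 1), (0, 0, 1), (-1, -1, -1), (0, 1, -1), (-1, -1, -1), (-1, -1, -1), (0, 0, 1), (0, -1, -1), (-1, 0, 1), (1, 1, -1), (0, -1, -1), (0, 0, 1), (-1, 1, 1), (1, 0, -1)],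
    ![(-1, -1, 1), (-1, -1, 1), (0, 0, 1), (-1, -1, 1), (0, 1, -1), (0, 1, -1), (0, 0, 1), (1, 1, -1), (1, 1, -1), (-2, -1, 1), (0, 0, 1), (-2, -1, 1), (-2, -1, 1), (1, 0, -1)],
    ![(0, 1, 1), (0, 1, 1), (-1, -1, -1), (0, 0, 1), (-1, -1, -1), (-1, -1, -1), (0, 0, 1), (0, -1, -1), (0, -1, -1), (0, 0, 1), (-1, 1, 1), (-1, 1, 1), (-1, 1, 1), (1, 0, -1)],
    ![(-1, -1, 1), (-1, -1, 1), (0, 1, 1), (-1, -1, 1), (0, 0, 1), (0, 1, -1), (0, 0, 1), (1, 1, -1), (0, 0, 1), (-2, -1, 1), (-1, 1, 1), (-2, -1, 1), (-2, -1, 1), (1, 0, -1)],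
    ![(-1, -1, 1), (-1, -1, 1), (0, 1, 1), (-1, -1, 1), (0, 1, 1), (0, 0, 1), (0, 0, 1), (0, 0, 1), (-1, 1, 1), (-2, -1, 1), (-1, 1, 1), (-2, -1, 1), (-2, -1, 1), (1, 0, -1)],
    ![(0, 0, 1), (0, 0, 1), (0, 0, 1), (0, 0, 1), (0, 0, 1), (0, 0, 1), (0, 0, 1), (1, 0, -1), (1, 0, -1), (1, 0, -1), (1, 0, -1), (1, 0, -1), (1, 0, -1), (1, 0, -1)],
    ![(-1, -1, -1), (0, -1, 1), (1, 1, 1), (0, -1, 1), (1, 1, 1), (0, 0, 1), (1, 0, 1), (0, 0, 1), (0, 1, 1), (-1, -1, 1), (0, 1, 1), (-1, -1, 1), (-1, -1, 1), (0, 0, 1)],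
    ![(0, -1, 1), (-1, 0, -1), (1, 1, 1), (0, -1, 1), (0, 0, 1), (-1, 1, -1), (1, 0, 1), (0, 1, -1), (0, 0, 1), (-1, -1, 1), (0, 1, 1), (-1, -1, 1), (-1, -1, 1), (0, 0, 1)],
    ![(1, 1, 1), (1, 1, 1), (-2, -1, -1), (0, 0, 1), (-2, -1, -1), (-2, -1, -1), (1, 0, 1), (-1, -1, -1), (-1, -1, -1), (0, 0, 1), (-1, -1, -1), (0, 1, 1), (0, 1, 1), (0, 0, 1)],
    ![(0, -1, 1), (0, -1, 1), (0, 0, 1), (-1, 1, -1), (-1, 1, -1), (-1, 1, -1), (1, 0, 1), (0, 1, -1), (0, 1, -1), (-1, -1, 1), (0, 0, 1), (-1, -1, 1), (-1, -1, 1), (0, 0, 1)],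
    ![(1, 1, 1), (0, 0, 1), (-2, -1, -1), (-1, 1, -1), (-2, -1, -1), (-2, -1, -1), (1, 0, 1), (-1, -1, -1), (-1, -1, -1), (0, 1, -1), (-1, -1, -1), (0, 0, 1), (0, 1, 1), (0, 0, 1)],
    ![(0, 0, 1), (-1, 1, -1), (-2, -1, -1), (-1, 1, -1), (-2, -1, -1), (-2, -1, -1), (1, 0, 1), (-1, -1, -1), (-1, -1, -1), (0, 1, -1), (-1, -1, -1), (0, 1, -1), (0, 0, 1), (0, 0, 1)],
    ![(1, 0, 1), (1, 0, 1), (1, 0, 1), (1, 0, 1), (1, 0, 1), (1, 0, 1), (1, 0, 1), (0, 0, 1), (0, 0, 1), (0, 0, 1), (0, 0, 1), (0, 0, 1), (0, 0, 1), (0, 0, 1)]]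

lemma badWitness_notCF (c : Fin 5 → ℤ) (m : ℤ × ℤ) (ε : ℤ) (hε : ε = 1 ∨ ε = -1)
    (h : ¬ IsCircularInterval (Nset (ε • c) m) ∨ Nset (ε • c) m = Finset.univ) :
    ¬ CohomologyFree c := by
  intro hCF
  obtain ⟨h1, h2⟩ := hCF m ε hε
  rcases h with h | h
  · exact h h1
  · exact h2 h

lemma adj_false_bad : ∀ i j : Fin 14, adjCF i j = false → i ≠ j →
    ((Wtab i j).2.2 = 1 ∨ (Wtab i j).2.2 = -1) ∧
    (¬ IsCircularInterval
        (Nset ((Wtab i j).2.2 • (Vfam i - Vfam j)) ((Wtab i j).1, (Wtab i j).2.1)) ∨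
      Nset ((Wtab i j).2.2 • (Vfam i - Vfam j)) ((Wtab i j).1, (Wtab i j).2.1) =
        Finset.univ) := by decide

lemma triangle_free : ∀ i j k : Fin 14, i ≠ j → i ≠ k → j ≠ k →
    adjCF i j = false ∨ adjCF i k = false ∨ adjCF j k = false := by decide

lemma Vfam_inj : Function.Injective Vfam := by decide

lemma exists_Vfam (d : Fin 5 → ℤ) (h : ∃ i : Fin 7, d = Afam i ∨ d = -Afam i) :
    ∃ k : Fin 14, d = Vfam k := by
  obtain ⟨i, hi | hi⟩ := h
  · exact ⟨⟨i, by omega⟩, by simpa [Vfam] using hi⟩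
  · refine ⟨⟨(i : ℕ) + 7, by omega⟩, ?_⟩
    have : ¬ ((i : ℕ) + 7 < 7) := by omega
    simp only [Vfam, this, dif_neg, not_false_iff]
    convert hi using 3
    exact Fin.ext (by simp)

lemma notCF_of_adj_false {i j : Fin 14} (h : adjCF i j = false) (hij : i ≠ j) :
    ¬ CohomologyFree (Vfam i - Vfam j) := by
  obtain ⟨hε, hbad⟩ := adj_false_bad i j h hij
  exact badWitness_notCF _ _ _ hε hbad

/-- At most two elements of `{±A₁, …, ±A₇}` can have all pairwise differences
cohomology-free. -/
theorem at_most_two_A (S : Finset (Fin 5 → ℤ))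
    (hS : ∀ d ∈ S, ∃ i : Fin 7, d = Afam i ∨ d = -Afam i)
    (hdiff : ∀ d ∈ S, ∀ d' ∈ S, CohomologyFree (d - d')) :
    S.card ≤ 2 := by
  by_contra h
  push_neg at h
  obtain ⟨t, hts, ht3⟩ := Finset.exists_subset_card_eq (s := S) (n := 3) (by omega)
  obtain ⟨a, b, c, hab, hac, hbc, rfl⟩ := Finset.card_eq_three.mp ht3
  have ha : a ∈ S := hts (by simp)
  have hb : b ∈ S := hts (by simp)
  have hc : c ∈ S := hts (by simp)
  obtain ⟨ka, hka⟩ := exists_Vfam a (hS a ha)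
  obtain ⟨kb, hkb⟩ := exists_Vfam b (hS b hb)
  obtain ⟨kc, hkc⟩ := exists_Vfam c (hS c hc)
  have hab' : ka ≠ kb := fun e => hab (by rw [hka, hkb, e])
  have hac' : ka ≠ kc := fun e => hac (by rw [hka, hkc, e])
  have hbc' : kb ≠ kc := fun e => hbc (by rw [hkb, hkc, e])
  rcases triangle_free ka kb kc hab' hac' hbc' with hF | hF | hF
  · exact notCF_of_adj_false hF hab' (hka ▸ hkb ▸ hdiff a ha b hb)
  · exact notCF_of_adj_false hF hac' (hka ▸ hkc ▸ hdiff a ha c hc)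
  · exact notCF_of_adj_false hF hbc' (hkb ▸ hkc ▸ hdiff b hb c hc)
end
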